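/- If Z ∈ ℝ^{(n+m)×(n+m)} is positive semidefinite with block form [[A, X],[Xᵀ, B]], then ‖X‖_* ≤ (1/2)(Tr(A) + Tr(B)) = (1/2)Tr(Z). -/

import Mathlib

open Matrix

lemma dot_mulVec_swap {n m : ℕ} (X : Matrix (Fin n) (Fin m) ℝ) (a : Fin m → ℝ) (b : Fin n → ℝ) :
    (X *ᵥ a) ⬝ᵥ b = a ⬝ᵥ (Xᵀ *ᵥ b) := by
  rw [dotProduct_comm, Matrix.dotProduct_mulVec, Matrix.mulVec_transpose,
    dotProduct_comm]

lemma psd_trace_nonneg {n : ℕ} {M : Matrix (Fin n) (Fin n) ℝ} (hM : M.PosSemidef) :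
    0 ≤ M.trace := by
  rw [Matrix.trace]
  apply Finset.sum_nonneg
  intro i _
  have := hM.dotProduct_mulVec_nonneg (Pi.single i 1)
  simpa [dotProduct, Matrix.mulVec, Pi.single_apply, Matrix.diag] using this

lemma sum_col_dot {m k : ℕ} (M : Matrix (Fin m) (Fin m) ℝ) (W : Matrix (Fin m) (Fin k) ℝ) :
    ∑ i, (fun j => W j i) ⬝ᵥ (M *ᵥ fun j => W j i) = (Wᵀ * M * W).trace := by
  simp only [Matrix.trace, Matrix.diag, Matrix.mul_apply, dotProduct, Matrix.mulVec,
    Matrix.transpose_apply, Finset.sum_mul, Finset.mul_sum]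
  refine Finset.sum_congr rfl fun i _ => ?_
  rw [Finset.sum_comm]
  refine Finset.sum_congr rfl fun a _ => Finset.sum_congr rfl fun b _ => by ring

lemma partial_isometry_trace_le {n k : ℕ} {A : Matrix (Fin n) (Fin n) ℝ} (hA : A.PosSemidef)
    (U : Matrix (Fin n) (Fin k) ℝ) (hU : U * (Uᵀ * U) = U) :
    (Uᵀ * A * U).trace ≤ A.trace := by
  set P := U * Uᵀ with hP
  have hP2 : P * P = P := by
    calc P * P = U * (Uᵀ * U) * Uᵀ := by
          simp only [hP, Matrix.mul_assoc]
      _ = P := by rw [hU]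
  have hPt : Pᵀ = P := by simp [hP, Matrix.transpose_mul]
  have hQt : (1 - P)ᵀ = 1 - P := by simp [Matrix.transpose_sub, hPt]
  have hQ2 : (1 - P) * (1 - P) = 1 - P := by
    simp [Matrix.sub_mul, Matrix.mul_sub, hP2]
  have hQAQ : ((1 - P) * A * (1 - P)).PosSemidef := by
    have h := hA.mul_mul_conjTranspose_same (1 - P)
    rwa [Matrix.conjTranspose_eq_transpose_of_trivial, hQt] at h
  have htr : A.trace - (Uᵀ * A * U).trace = ((1 - P) * A * (1 - P)).trace := by
    have h1 : (Uᵀ * A * U).trace = (A * P).trace := by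
      rw [Matrix.mul_assoc, Matrix.trace_mul_comm, Matrix.mul_assoc]
    have h2 : ((1 - P) * A * (1 - P)).trace = (A * (1 - P)).trace := by
      rw [Matrix.trace_mul_comm, ← Matrix.mul_assoc, hQ2, Matrix.trace_mul_comm]
    rw [h1, h2, Matrix.mul_sub, Matrix.mul_one, Matrix.trace_sub]
  have := psd_trace_nonneg hQAQ
  linarith [htr ▸ this]

noncomputable def nuclearNorm {n m : ℕ} (X : Matrix (Fin n) (Fin m) ℝ) : ℝ :=
  ∑ i, Real.sqrt (((by rw [Matrix.IsHermitian, Matrix.conjTranspose_eq_transpose_of_trivial, Matrix.transpose_mul, Matrix.transpose_transpose]) : (Xᵀ * X).IsHermitian).eigenvalues i)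

noncomputable def frob {n m : ℕ} (X : Matrix (Fin n) (Fin m) ℝ) : ℝ :=
  Real.sqrt (∑ i, ∑ j, (X i j)^2)

theorem stmt_4 {n m : ℕ} (A : Matrix (Fin n) (Fin n) ℝ) (B : Matrix (Fin m) (Fin m) ℝ)
    (X : Matrix (Fin n) (Fin m) ℝ)
    (hZ : (Matrix.fromBlocks A X Xᵀ B).PosSemidef) :
    nuclearNorm X ≤ (1/2) * (A.trace + B.trace) ∧
    (1/2) * (A.trace + B.trace) = (1/2) * (Matrix.fromBlocks A X Xᵀ B).trace := by
  classical
  have hH : (Xᵀ * X).IsHermitian := by rw [Matrix.IsHermitian, Matrix.conjTranspose_eq_transpose_of_trivial, Matrix.transpose_mul, Matrix.transpose_transpose]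
  set lam : Fin m → ℝ := hH.eigenvalues with hlamdef
  have hXtX : (Xᵀ * X).PosSemidef := by
    have h := Matrix.posSemidef_conjTranspose_mul_self X
    rwa [Matrix.conjTranspose_eq_transpose_of_trivial] at h
  have hlam : ∀ i, 0 ≤ lam i := fun i => hXtX.eigenvalues_nonneg i
  set v : Fin m → Fin m → ℝ := fun i => (hH.eigenvectorBasis i : EuclideanSpace ℝ (Fin m))
    with hvdef
  have hv_orth : ∀ i j, v i ⬝ᵥ v j = if i = j then 1 else 0 := by
    intro i j
    have h := (orthonormal_iff_ite.mp hH.eigenvectorBasis.orthonormal) i j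
    simpa [PiLp.inner_apply, dotProduct, mul_comm] using h
  have hv_eig : ∀ i, (Xᵀ * X) *ᵥ v i = lam i • v i := fun i => hH.mulVec_eigenvectorBasis i
  have hXv : ∀ i j, (X *ᵥ v i) ⬝ᵥ (X *ᵥ v j) = if i = j then lam j else 0 := by
    intro i j
    rw [dot_mulVec_swap, Matrix.mulVec_mulVec, hv_eig j, dotProduct_smul,
      smul_eq_mul, hv_orth i j]
    by_cases h : i = j <;> simp [h]
  set σ : Fin m → ℝ := fun i => Real.sqrt (lam i) with hσdef
  have hσsq : ∀ i, σ i * σ i = lam i := fun i => Real.mul_self_sqrt (hlam i)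
  set u : Fin m → Fin n → ℝ := fun i => (σ i)⁻¹ • (X *ᵥ v i) with hudef
  have huXv : ∀ i, u i ⬝ᵥ (X *ᵥ v i) = σ i := by
    intro i
    rw [hudef]
    simp only [smul_dotProduct, hXv i i, if_pos rfl, smul_eq_mul]
    rw [← hσsq i]
    by_cases h : σ i = 0
    · simp [h]
    · field_simp
      simp
  have huu : ∀ i j, u i ⬝ᵥ u j = if i = j then (if σ i = 0 then 0 else 1) else 0 := by
    intro i j
    rw [hudef]
    simp only [smul_dotProduct, dotProduct_smul, smul_eq_mul, hXv i j]
    by_cases hij : i = j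
    · subst hij
      by_cases h : σ i = 0
      · simp [h]
      · rw [if_pos rfl, if_pos rfl, if_neg h, ← hσsq i]
        field_simp
    · simp [hij]
  -- PSD of A and B
  have hA : A.PosSemidef := by
    have h := hZ.submatrix (Sum.inl : Fin n → Fin n ⊕ Fin m)
    have he : (Matrix.fromBlocks A X Xᵀ B).submatrix Sum.inl Sum.inl = A := by
      ext i j; simp [Matrix.submatrix_apply]
    rwa [he] at h
  -- key per-index inequality
  have key : ∀ i, 2 * σ i ≤ u i ⬝ᵥ (A *ᵥ u i) + v i ⬝ᵥ (B *ᵥ v i) := by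
    intro i
    have h0 := hZ.dotProduct_mulVec_nonneg (Sum.elim (u i) (-(v i)))
    rw [show (Sum.elim (u i) (-(v i))) = Sum.elim (u i) (-(v i)) from rfl] at h0
    rw [Matrix.fromBlocks_mulVec] at h0
    simp only [star_trivial, sumElim_dotProduct_sumElim, dotProduct_add,
      Matrix.mulVec_neg, dotProduct_neg, neg_dotProduct, neg_neg,
      Sum.elim_comp_inl, Sum.elim_comp_inr] at h0
    have hswap : v i ⬝ᵥ (Xᵀ *ᵥ u i) = u i ⬝ᵥ (X *ᵥ v i) := by
      rw [← dot_mulVec_swap, dotProduct_comm]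
    rw [hswap, huXv i] at h0
    linarith
  -- sum over v equals trace B
  set V : Matrix (Fin m) (Fin m) ℝ := Matrix.of fun j i => v i j with hVdef
  have hVtV : Vᵀ * V = 1 := by
    ext i j
    have h := hv_orth i j
    simpa [hVdef, Matrix.mul_apply, dotProduct, Matrix.one_apply] using h
  have hsum_v : ∑ i, v i ⬝ᵥ (B *ᵥ v i) = B.trace := by
    have h := sum_col_dot B V
    rw [show (∑ i, (fun j => V j i) ⬝ᵥ (B *ᵥ fun j => V j i)) = ∑ i, v i ⬝ᵥ (B *ᵥ v i)
      from rfl] at h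
    rw [h, Matrix.mul_assoc, Matrix.trace_mul_comm, Matrix.mul_assoc,
      mul_eq_one_comm.mp hVtV, Matrix.mul_one]
  -- sum over u bounded by trace A
  set U : Matrix (Fin n) (Fin m) ℝ := Matrix.of fun a i => u i a with hUdef
  have hu_zero : ∀ i, σ i = 0 → u i = 0 := by
    intro i h; rw [hudef]; simp [h]
  have hU_cond : U * (Uᵀ * U) = U := by
    ext a i
    rw [Matrix.mul_apply]
    have hUtU : ∀ j, (Uᵀ * U) j i = if j = i then (if σ j = 0 then 0 else 1) else 0 := by
      intro j
      rw [Matrix.mul_apply]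
      simp only [Matrix.transpose_apply, hUdef, Matrix.of_apply]
      rw [show ∑ k, u j k * u i k = u j ⬝ᵥ u i from rfl, huu j i]
    simp only [hUtU, mul_ite, mul_zero]
    rw [Finset.sum_ite_eq' Finset.univ i]
    by_cases h : σ i = 0
    · simp [h, hUdef, hu_zero i h]
    · simp [h]
  have hsum_u : ∑ i, u i ⬝ᵥ (A *ᵥ u i) ≤ A.trace := by
    have h := sum_col_dot A U
    rw [show (∑ i, (fun j => U j i) ⬝ᵥ (A *ᵥ fun j => U j i)) = ∑ i, u i ⬝ᵥ (A *ᵥ u i)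
      from rfl] at h
    rw [h]
    exact partial_isometry_trace_le hA U hU_cond
  have hnn : nuclearNorm X = ∑ i, σ i := rfl
  have hs := Finset.sum_le_sum (fun i (_ : i ∈ Finset.univ) => key i)
  rw [Finset.sum_add_distrib, hsum_v, ← Finset.mul_sum] at hs
  have h2 : 2 * nuclearNorm X ≤ A.trace + B.trace := by
    rw [hnn]; linarith
  have htr : (Matrix.fromBlocks A X Xᵀ B).trace = A.trace + B.trace := by
    simp [Matrix.trace, Matrix.diag, Fintype.sum_sum_type]
  exact ⟨by linarith, by rw [htr]⟩
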